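/- (Duality identity for finite-state Markov chains via the set-valued dual.) Let E be a finite set, (m_{i,j}) nonnegative jump rates, (Z_t) the Markov jump process on E with generator (Qf)(i) = Σ_j m_{i,j}(f(j)−f(i)), and (A_t) the set-valued Markov jump process on subsets of E with transitions A → A ∪ {i} at rate Σ_{ℓ∈A} m_{i,ℓ} (for i ∉ A) and A → A \ {i} at rate Σ_{ℓ∉A} m_{i,ℓ} (for i ∈ A). Then for all t ≥ 0 and all i, j ∈ E: P[Z_t = j | Z_0 = i] = P[i ∈ A_t | A_0 = {j}]. Equivalently, for all A ⊆ E, P[Z_t ∈ A | Z_0 = i] = P[i ∈ A_t | A_0 = A]. -/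

import Mathlib

open Finset

/-- The generator matrix of the Markov jump process on `E` with jump rates `m i j`. -/
def rateMatrix {E : Type*} [Fintype E] [DecidableEq E] (m : E → E → ℝ) :
    Matrix E E ℝ := fun i j =>
  if i = j then -(∑ k ∈ univ.erase i, m i k) else m i j

/-- The jump rate of the set-valued dual chain from `A` to `B`:
`A → A ∪ {i}` at rate `Σ_{ℓ∈A} m_{i,ℓ}` (for `i ∉ A`) and `A → A ∖ {i}` at rate
`Σ_{ℓ∉A} m_{i,ℓ}` (for `i ∈ A`). -/
def setRate {E : Type*} [Fintype E] [DecidableEq E] (m : E → E → ℝ)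
    (A B : Finset E) : ℝ :=
  (∑ i ∈ Aᶜ, if B = insert i A then ∑ ℓ ∈ A, m i ℓ else 0)
    + (∑ i ∈ A, if B = A.erase i then ∑ ℓ ∈ Aᶜ, m i ℓ else 0)

/-- The generator matrix of the set-valued dual chain. -/
def setRateMatrix {E : Type*} [Fintype E] [DecidableEq E] (m : E → E → ℝ) :
    Matrix (Finset E) (Finset E) ℝ := fun A B =>
  if B = A then -(∑ C ∈ univ.erase A, setRate m A C) else setRate m A B

namespace SetDualAux

open scoped Matrix

variable {E : Type*} [Fintype E] [DecidableEq E]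

/-- The duality kernel `H(A, i) = 1_{i ∈ A}` as a rectangular matrix. -/
def memMatrix (E : Type*) [Fintype E] [DecidableEq E] : Matrix (Finset E) E ℝ :=
  fun A i => if i ∈ A then 1 else 0

lemma setRate_self (m : E → E → ℝ) (A : Finset E) : setRate m A A = 0 := by
  unfold setRate
  rw [Finset.sum_eq_zero, Finset.sum_eq_zero, add_zero]
  · intro j hj
    rw [if_neg]
    intro h
    exact (Finset.notMem_erase j A) (h ▸ hj)
  · intro j hj
    rw [if_neg]
    intro h
    exact (Finset.mem_compl.mp hj) (h ▸ Finset.mem_insert_self j A)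

lemma sum_filter_setRate (m : E → E → ℝ) (A : Finset E) (i : E) :
    ∑ B ∈ univ.filter (fun B : Finset E => i ∈ B), setRate m A B
      = (∑ j ∈ Aᶜ, if i ∈ insert j A then ∑ ℓ ∈ A, m j ℓ else 0)
        + ∑ j ∈ A, if i ∈ A.erase j then ∑ ℓ ∈ Aᶜ, m j ℓ else 0 := by
  unfold setRate
  rw [Finset.sum_add_distrib]
  congr 1
  · rw [Finset.sum_comm]
    refine Finset.sum_congr rfl fun j _ => ?_
    rw [Finset.sum_ite_eq' (univ.filter (fun B : Finset E => i ∈ B)) (insert j A)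
      (fun _ => ∑ ℓ ∈ A, m j ℓ)]
    simp [Finset.mem_filter]
  · rw [Finset.sum_comm]
    refine Finset.sum_congr rfl fun j _ => ?_
    rw [Finset.sum_ite_eq' (univ.filter (fun B : Finset E => i ∈ B)) (A.erase j)
      (fun _ => ∑ ℓ ∈ Aᶜ, m j ℓ)]
    simp [Finset.mem_filter]

lemma sum_univ_setRate (m : E → E → ℝ) (A : Finset E) :
    ∑ B : Finset E, setRate m A B
      = (∑ j ∈ Aᶜ, ∑ ℓ ∈ A, m j ℓ) + ∑ j ∈ A, ∑ ℓ ∈ Aᶜ, m j ℓ := by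
  unfold setRate
  rw [Finset.sum_add_distrib]
  congr 1
  · rw [Finset.sum_comm]
    refine Finset.sum_congr rfl fun j _ => ?_
    rw [Finset.sum_ite_eq' univ (insert j A) (fun _ => ∑ ℓ ∈ A, m j ℓ)]
    simp
  · rw [Finset.sum_comm]
    refine Finset.sum_congr rfl fun j _ => ?_
    rw [Finset.sum_ite_eq' univ (A.erase j) (fun _ => ∑ ℓ ∈ Aᶜ, m j ℓ)]
    simp

/-- The generator-level intertwining relation `Q' H = H Qᵀ`. -/
lemma generator_intertwine (m : E → E → ℝ) :
    setRateMatrix m * memMatrix E = memMatrix E * (rateMatrix m)ᵀ := by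
  ext A i
  rw [Matrix.mul_apply, Matrix.mul_apply]
  have hdiag : ∀ B : Finset E,
      setRateMatrix m A B = setRate m A B
        + if B = A then -(∑ C : Finset E, setRate m A C) else 0 := by
    intro B
    unfold setRateMatrix
    by_cases h : B = A
    · subst h
      rw [if_pos rfl, if_pos rfl, setRate_self, zero_add,
        Finset.sum_erase_eq_sub (Finset.mem_univ B), setRate_self]
      ring
    · rw [if_neg h, if_neg h, add_zero]
  -- RHS : ∑_{j ∈ A} Q i j
  have hR : ∑ j, memMatrix E A j * (rateMatrix m)ᵀ j i
      = ∑ j ∈ A, rateMatrix m i j := by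
    simp only [memMatrix, Matrix.transpose_apply, ite_mul, one_mul, zero_mul]
    rw [Finset.sum_ite_mem, Finset.univ_inter]
  -- LHS : ∑_{B ∋ i} Q' A B
  have hL : ∑ B, setRateMatrix m A B * memMatrix E B i
      = ∑ B ∈ univ.filter (fun B : Finset E => i ∈ B), setRateMatrix m A B := by
    simp only [memMatrix, mul_ite, mul_one, mul_zero]
    rw [Finset.sum_filter]
  rw [hL, hR]
  simp only [hdiag]
  rw [Finset.sum_add_distrib, sum_filter_setRate]
  have hAmem : (∑ B ∈ univ.filter (fun B : Finset E => i ∈ B),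
      if B = A then -(∑ C : Finset E, setRate m A C) else 0)
      = if i ∈ A then -(∑ C : Finset E, setRate m A C) else 0 := by
    rw [Finset.sum_ite_eq' (univ.filter (fun B : Finset E => i ∈ B)) A
      (fun _ => -(∑ C : Finset E, setRate m A C))]
    simp [Finset.mem_filter]
  rw [hAmem, sum_univ_setRate]
  by_cases hi : i ∈ A
  · -- both sides equal `-∑_{ℓ ∈ Aᶜ} m i ℓ`
    rw [if_pos hi]
    have h1 : (∑ j ∈ Aᶜ, if i ∈ insert j A then ∑ ℓ ∈ A, m j ℓ else 0)
        = ∑ j ∈ Aᶜ, ∑ ℓ ∈ A, m j ℓ :=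
      Finset.sum_congr rfl fun j _ => if_pos (Finset.mem_insert_of_mem hi)
    have h2 : (∑ j ∈ A, if i ∈ A.erase j then ∑ ℓ ∈ Aᶜ, m j ℓ else 0)
        = (∑ j ∈ A, ∑ ℓ ∈ Aᶜ, m j ℓ) - ∑ ℓ ∈ Aᶜ, m i ℓ := by
      have he : ∀ j ∈ A, (if i ∈ A.erase j then ∑ ℓ ∈ Aᶜ, m j ℓ else 0)
          = (∑ ℓ ∈ Aᶜ, m j ℓ) - (if j = i then ∑ ℓ ∈ Aᶜ, m j ℓ else 0) := by
        intro j hj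
        by_cases hji : j = i
        · subst hji
          simp [Finset.mem_erase]
        · simp [Finset.mem_erase, hi, hji, Ne.symm hji]
      rw [Finset.sum_congr rfl he, Finset.sum_sub_distrib,
        Finset.sum_ite_eq' A i (fun j => ∑ ℓ ∈ Aᶜ, m j ℓ), if_pos hi]
    have hRv : ∑ j ∈ A, rateMatrix m i j = -∑ ℓ ∈ Aᶜ, m i ℓ := by
      rw [← Finset.add_sum_erase A _ hi]
      have h4 : ∑ j ∈ A.erase i, rateMatrix m i j = ∑ j ∈ A.erase i, m i j :=
        Finset.sum_congr rfl fun j hj =>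
          if_neg (Ne.symm (Finset.mem_erase.mp hj).1)
      have h5 : ∑ k ∈ univ.erase i, m i k = (∑ k : E, m i k) - m i i :=
        Finset.sum_erase_eq_sub (Finset.mem_univ i)
      have h6 : ∑ j ∈ A.erase i, m i j = (∑ j ∈ A, m i j) - m i i :=
        Finset.sum_erase_eq_sub hi
      have h7 : (∑ j ∈ A, m i j) + ∑ j ∈ Aᶜ, m i j = ∑ j : E, m i j :=
        Finset.sum_add_sum_compl A _
      rw [h4, h6]
      unfold rateMatrix
      rw [if_pos rfl, h5]
      linarith
    rw [h1, h2, hRv]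
    ring
  · -- both sides equal `∑_{ℓ ∈ A} m i ℓ`
    rw [if_neg hi]
    have h1 : (∑ j ∈ Aᶜ, if i ∈ insert j A then ∑ ℓ ∈ A, m j ℓ else 0)
        = ∑ ℓ ∈ A, m i ℓ := by
      have he : ∀ j ∈ Aᶜ, (if i ∈ insert j A then ∑ ℓ ∈ A, m j ℓ else 0)
          = (if j = i then ∑ ℓ ∈ A, m j ℓ else 0) := by
        intro j hj
        by_cases hji : j = i
        · subst hji
          simp
        · rw [if_neg, if_neg hji]
          simp only [Finset.mem_insert]
          rintro (h | h)
          · exact hji h.symm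
          · exact hi h
      rw [Finset.sum_congr rfl he,
        Finset.sum_ite_eq' Aᶜ i (fun j => ∑ ℓ ∈ A, m j ℓ),
        if_pos (Finset.mem_compl.mpr hi)]
    have h2 : (∑ j ∈ A, if i ∈ A.erase j then ∑ ℓ ∈ Aᶜ, m j ℓ else 0) = 0 :=
      Finset.sum_eq_zero fun j hj =>
        if_neg fun h => hi (Finset.mem_of_mem_erase h)
    have hRv : ∑ j ∈ A, rateMatrix m i j = ∑ j ∈ A, m i j :=
      Finset.sum_congr rfl fun j hj => if_neg (by rintro rfl; exact hi hj)
    rw [h1, h2, hRv]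
    ring

/-- If `A K = K B` then the same interchange holds for the matrix exponentials. -/
lemma exp_intertwine {n p : Type*} [Fintype n] [DecidableEq n] [Fintype p] [DecidableEq p]
    (A : Matrix n n ℝ) (B : Matrix p p ℝ) (K : Matrix n p ℝ) (h : A * K = K * B) :
    NormedSpace.exp A * K = K * NormedSpace.exp B := by
  letI : SeminormedRing (Matrix n n ℝ) := Matrix.linftyOpSemiNormedRing
  letI : NormedRing (Matrix n n ℝ) := Matrix.linftyOpNormedRing
  letI : NormedAlgebra ℝ (Matrix n n ℝ) := Matrix.linftyOpNormedAlgebra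
  letI : SeminormedRing (Matrix p p ℝ) := Matrix.linftyOpSemiNormedRing
  letI : NormedRing (Matrix p p ℝ) := Matrix.linftyOpNormedRing
  letI : NormedAlgebra ℝ (Matrix p p ℝ) := Matrix.linftyOpNormedAlgebra
  have hpow : ∀ k : ℕ, A ^ k * K = K * B ^ k := by
    intro k
    induction k with
    | zero => simp
    | succ k ih =>
        rw [pow_succ, pow_succ, Matrix.mul_assoc, h, ← Matrix.mul_assoc, ih,
          Matrix.mul_assoc]
  have hA : Summable fun k : ℕ => ((Nat.factorial k : ℝ))⁻¹ • A ^ k :=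
    NormedSpace.expSeries_summable' A
  have hB : Summable fun k : ℕ => ((Nat.factorial k : ℝ))⁻¹ • B ^ k :=
    NormedSpace.expSeries_summable' B
  let L₁ : Matrix n n ℝ →ₗ[ℝ] Matrix n p ℝ :=
    { toFun := fun X => X * K
      map_add' := fun X Y => Matrix.add_mul X Y K
      map_smul' := fun c X => Matrix.smul_mul c X K }
  let L₂ : Matrix p p ℝ →ₗ[ℝ] Matrix n p ℝ :=
    { toFun := fun X => K * X
      map_add' := fun X Y => Matrix.mul_add K X Y
      map_smul' := fun c X => Matrix.mul_smul K c X }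
  have hc₁ : Continuous L₁ := continuous_id.matrix_mul continuous_const
  have hc₂ : Continuous L₂ := continuous_const.matrix_mul continuous_id
  let C₁ : Matrix n n ℝ →L[ℝ] Matrix n p ℝ := ⟨L₁, hc₁⟩
  let C₂ : Matrix p p ℝ →L[ℝ] Matrix n p ℝ := ⟨L₂, hc₂⟩
  calc NormedSpace.exp A * K
      = C₁ (∑' k : ℕ, ((Nat.factorial k : ℝ))⁻¹ • A ^ k) := by
        rw [NormedSpace.exp_eq_tsum ℝ]
        rfl
    _ = ∑' k : ℕ, C₁ (((Nat.factorial k : ℝ))⁻¹ • A ^ k) := C₁.map_tsum hA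
    _ = ∑' k : ℕ, C₂ (((Nat.factorial k : ℝ))⁻¹ • B ^ k) := by
        refine tsum_congr fun k => ?_
        show ((Nat.factorial k : ℝ))⁻¹ • A ^ k * K = K * (((Nat.factorial k : ℝ))⁻¹ • B ^ k)
        rw [Matrix.smul_mul, Matrix.mul_smul, hpow]
    _ = C₂ (∑' k : ℕ, ((Nat.factorial k : ℝ))⁻¹ • B ^ k) := (C₂.map_tsum hB).symm
    _ = K * NormedSpace.exp B := by
        rw [NormedSpace.exp_eq_tsum ℝ]
        rfl

end SetDualAux

open scoped Matrix

theorem setvalued_duality_identity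
    {E : Type*} [Fintype E] [DecidableEq E]
    (m : E → E → ℝ) (hm : ∀ i j : E, i ≠ j → 0 ≤ m i j) :
    ∀ t : ℝ, 0 ≤ t →
      (∀ i j : E,
        NormedSpace.exp (t • rateMatrix m) i j
          = ∑ B ∈ univ.filter (fun B : Finset E => i ∈ B),
              NormedSpace.exp (t • setRateMatrix m) {j} B) ∧
      (∀ (i : E) (A : Finset E),
        ∑ j ∈ A, NormedSpace.exp (t • rateMatrix m) i j
          = ∑ B ∈ univ.filter (fun B : Finset E => i ∈ B),
              NormedSpace.exp (t • setRateMatrix m) A B) := by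
  classical
  intro t _
  -- key matrix identity: `exp(tQ') H = H exp(tQ)ᵀ`
  have hgen : (t • setRateMatrix m) * SetDualAux.memMatrix E
      = SetDualAux.memMatrix E * (t • rateMatrix m)ᵀ := by
    rw [Matrix.transpose_smul, Matrix.smul_mul, Matrix.mul_smul,
      SetDualAux.generator_intertwine]
  have key : NormedSpace.exp (t • setRateMatrix m) * SetDualAux.memMatrix E
      = SetDualAux.memMatrix E * (NormedSpace.exp (t • rateMatrix m))ᵀ := by
    rw [← Matrix.exp_transpose]
    exact SetDualAux.exp_intertwine _ _ _ hgen
  have main : ∀ (i : E) (A : Finset E),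
      ∑ j ∈ A, NormedSpace.exp (t • rateMatrix m) i j
        = ∑ B ∈ univ.filter (fun B : Finset E => i ∈ B),
            NormedSpace.exp (t • setRateMatrix m) A B := by
    intro i A
    have hK := congrFun (congrFun key A) i
    rw [Matrix.mul_apply, Matrix.mul_apply] at hK
    simp only [SetDualAux.memMatrix, mul_ite, mul_one, mul_zero, ite_mul,
      one_mul, zero_mul, Matrix.transpose_apply] at hK
    rw [Finset.sum_ite_mem, Finset.univ_inter] at hK
    rw [← hK, Finset.sum_filter]
  refine ⟨fun i j => ?_, main⟩
  have := main i {j}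
  rwa [Finset.sum_singleton] at this
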